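/- Let T̲_1, …, T̲_n and S̲_1, …, S̲_n be two finite sequences of lower transition operators on ℝ^𝒳. Then ‖T̲_1∘T̲_2∘⋯∘T̲_n − S̲_1∘S̲_2∘⋯∘S̲_n‖ ≤ Σ_{i=1}^n ‖T̲_i − S̲_i‖, where for maps A, B : ℝ^𝒳 → ℝ^𝒳 we write ‖A − B‖ := sup{‖Af − Bf‖ : f ∈ ℝ^𝒳, ‖f‖ = 1}. -/

import Mathlib

open scoped BigOperators

/-- A lower transition operator on `ℝ^𝒳`: bounded below by the minimum (LT1),
super-additive (LT2), and non-negatively homogeneous (LT3). -/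
def IsLowerTransitionOperator {X : Type*} [Fintype X] (T : (X → ℝ) → (X → ℝ)) : Prop :=
  (∀ f : X → ℝ, ∀ x : X, (⨅ y, f y) ≤ T f x) ∧
  (∀ f g : X → ℝ, ∀ x : X, T f x + T g x ≤ T (f + g) x) ∧
  (∀ c : ℝ, 0 ≤ c → ∀ f : X → ℝ, T (c • f) = c • T f)

/-- The distance `‖A − B‖ = sup{‖Af − Bf‖ : ‖f‖ = 1}` between two maps of `ℝ^𝒳`,
where `‖·‖` is the supremum norm. -/
noncomputable def opDist {X : Type*} [Fintype X]
    (A B : (X → ℝ) → (X → ℝ)) : ℝ :=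
  ⨆ f : {f : X → ℝ // ‖f‖ = 1}, ‖A f.1 - B f.1‖

/-- The composition `T 0 ∘ T 1 ∘ ⋯ ∘ T (n-1)` of a finite family of operators,
in the given order. -/
def compFamily {X : Type*} {n : ℕ} (T : Fin n → ((X → ℝ) → (X → ℝ))) :
    (X → ℝ) → (X → ℝ) :=
  (List.ofFn T).foldr (· ∘ ·) id

section Aux

variable {X : Type*} [Fintype X] [Nonempty X]

lemma lto_zero {T : (X → ℝ) → (X → ℝ)} (hT : IsLowerTransitionOperator T) : T 0 = 0 := by
  have := hT.2.2 0 le_rfl 0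
  simpa using this

lemma lto_lower {T : (X → ℝ) → (X → ℝ)} (hT : IsLowerTransitionOperator T)
    (f g : X → ℝ) (x : X) : T g x + T (f - g) x ≤ T f x := by
  have := hT.2.1 g (f - g) x
  simpa using this

lemma neg_norm_le_inf (f : X → ℝ) : -‖f‖ ≤ ⨅ y, f y :=
  le_ciInf fun y => (abs_le.mp (by simpa [Real.norm_eq_abs] using norm_le_pi_norm f y)).1

lemma lto_nonexp {T : (X → ℝ) → (X → ℝ)} (hT : IsLowerTransitionOperator T)
    (f g : X → ℝ) : ‖T f - T g‖ ≤ ‖f - g‖ := by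
  rw [pi_norm_le_iff_of_nonneg (norm_nonneg _)]
  intro x
  rw [Real.norm_eq_abs, abs_le]
  constructor
  · have h1 : T g x + T (f - g) x ≤ T f x := lto_lower hT f g x
    have h2 : -‖f - g‖ ≤ T (f - g) x := le_trans (neg_norm_le_inf _) (hT.1 _ x)
    simp only [Pi.sub_apply]; linarith
  · have h1 : T f x + T (g - f) x ≤ T g x := lto_lower hT g f x
    have h2 : -‖g - f‖ ≤ T (g - f) x := le_trans (neg_norm_le_inf _) (hT.1 _ x)
    have h3 : ‖g - f‖ = ‖f - g‖ := norm_sub_rev _ _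
    simp only [Pi.sub_apply]; linarith

lemma lto_norm_le {T : (X → ℝ) → (X → ℝ)} (hT : IsLowerTransitionOperator T)
    (f : X → ℝ) : ‖T f‖ ≤ ‖f‖ := by
  have := lto_nonexp hT f 0
  simpa [lto_zero hT] using this

lemma lto_mono {T : (X → ℝ) → (X → ℝ)} (hT : IsLowerTransitionOperator T)
    {f g : X → ℝ} (h : f ≤ g) (x : X) : T f x ≤ T g x := by
  have h1 := lto_lower hT g f x
  have h2 : (0:ℝ) ≤ T (g - f) x :=
    le_trans (le_ciInf fun y => sub_nonneg.mpr (h y)) (hT.1 _ x)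
  linarith

lemma lto_id : IsLowerTransitionOperator (id : (X → ℝ) → (X → ℝ)) := by
  refine ⟨fun f x => ciInf_le (Finite.bddBelow_range _) x, fun f g x => le_of_eq rfl, ?_⟩
  intro c hc f; rfl

lemma lto_comp {T U : (X → ℝ) → (X → ℝ)} (hT : IsLowerTransitionOperator T)
    (hU : IsLowerTransitionOperator U) : IsLowerTransitionOperator (T ∘ U) := by
  refine ⟨?_, ?_, ?_⟩
  · intro f x
    exact le_trans (le_ciInf fun y => hU.1 f y) (hT.1 (U f) x)
  · intro f g x
    calc T (U f) x + T (U g) x ≤ T (U f + U g) x := hT.2.1 _ _ x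
      _ ≤ T (U (f + g)) x := lto_mono hT (fun y => hU.2.1 f g y) x
  · intro c hc f
    simp only [Function.comp_apply, hU.2.2 c hc f, hT.2.2 c hc (U f)]

noncomputable instance : Nonempty {f : X → ℝ // ‖f‖ = 1} :=
  ⟨⟨fun _ => (1:ℝ), by simpa using (pi_norm_const (1:ℝ))⟩⟩

lemma opDist_bdd {A B : (X → ℝ) → (X → ℝ)} (hA : IsLowerTransitionOperator A)
    (hB : IsLowerTransitionOperator B) :
    BddAbove (Set.range fun f : {f : X → ℝ // ‖f‖ = 1} => ‖A f.1 - B f.1‖) := by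
  refine ⟨2, ?_⟩
  rintro _ ⟨f, rfl⟩
  have h1 := norm_sub_le (A f.1) (B f.1)
  have h2 := lto_norm_le hA f.1
  have h3 := lto_norm_le hB f.1
  have h4 := f.2
  dsimp only
  linarith

lemma opDist_nonneg {A B : (X → ℝ) → (X → ℝ)} (hA : IsLowerTransitionOperator A)
    (hB : IsLowerTransitionOperator B) : 0 ≤ opDist A B := by
  obtain ⟨f⟩ := (inferInstance : Nonempty {f : X → ℝ // ‖f‖ = 1})
  exact le_trans (norm_nonneg _) (le_ciSup (opDist_bdd hA hB) f)

lemma opDist_le_of {A B : (X → ℝ) → (X → ℝ)} (hA : IsLowerTransitionOperator A)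
    (hB : IsLowerTransitionOperator B) {g : X → ℝ} (hg : ‖g‖ ≤ 1) :
    ‖A g - B g‖ ≤ opDist A B := by
  rcases eq_or_ne g 0 with rfl | hg0
  · simpa [lto_zero hA, lto_zero hB] using opDist_nonneg hA hB
  · have hgn : (0:ℝ) < ‖g‖ := norm_pos_iff.mpr hg0
    set u : X → ℝ := ‖g‖⁻¹ • g with hu
    have hun : ‖u‖ = 1 := by
      rw [hu, norm_smul, Real.norm_eq_abs, abs_of_pos (inv_pos.mpr hgn),
        inv_mul_cancel₀ hgn.ne']
    have hgu : g = ‖g‖ • u := by rw [hu, smul_inv_smul₀ hgn.ne']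
    have hAg : A g = ‖g‖ • A u := by
      conv_lhs => rw [hgu]
      rw [hA.2.2 _ (norm_nonneg g) u]
    have hBg : B g = ‖g‖ • B u := by
      conv_lhs => rw [hgu]
      rw [hB.2.2 _ (norm_nonneg g) u]
    have : ‖A g - B g‖ = ‖g‖ * ‖A u - B u‖ := by
      rw [hAg, hBg, ← smul_sub, norm_smul, Real.norm_eq_abs, abs_of_pos hgn]
    rw [this]
    calc ‖g‖ * ‖A u - B u‖ ≤ 1 * ‖A u - B u‖ :=
          mul_le_mul_of_nonneg_right hg (norm_nonneg _)
      _ = ‖A u - B u‖ := one_mul _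
      _ ≤ opDist A B := le_ciSup (opDist_bdd hA hB) ⟨u, hun⟩

lemma opDist_comp_le {A B C D : (X → ℝ) → (X → ℝ)} (hA : IsLowerTransitionOperator A)
    (hB : IsLowerTransitionOperator B) (hC : IsLowerTransitionOperator C)
    (hD : IsLowerTransitionOperator D) :
    opDist (A ∘ C) (B ∘ D) ≤ opDist A B + opDist C D := by
  refine ciSup_le fun f => ?_
  simp only [Function.comp_apply]
  calc ‖A (C f.1) - B (D f.1)‖
      ≤ ‖A (C f.1) - B (C f.1)‖ + ‖B (C f.1) - B (D f.1)‖ := by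
        have := norm_sub_le (A (C f.1) - B (C f.1)) (B (D f.1) - B (C f.1))
        have heq : A (C f.1) - B (C f.1) - (B (D f.1) - B (C f.1))
            = A (C f.1) - B (D f.1) := by abel
        rw [heq] at this
        simpa [norm_sub_rev (B (D f.1))] using this
    _ ≤ opDist A B + opDist C D := by
        refine add_le_add ?_ ?_
        · exact opDist_le_of hA hB (le_trans (lto_norm_le hC f.1) (le_of_eq f.2))
        · exact le_trans (lto_nonexp hB _ _)
            (le_trans (le_of_eq rfl) (le_ciSup (opDist_bdd hC hD) f))

lemma compFamily_succ {n : ℕ} (T : Fin (n+1) → ((X → ℝ) → (X → ℝ))) :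
    compFamily T = T 0 ∘ compFamily (fun i => T i.succ) := by
  simp [compFamily, List.ofFn_succ]

lemma compFamily_lto {n : ℕ} (T : Fin n → ((X → ℝ) → (X → ℝ)))
    (hT : ∀ i, IsLowerTransitionOperator (T i)) :
    IsLowerTransitionOperator (compFamily T) := by
  induction n with
  | zero => exact lto_id
  | succ n ih =>
    rw [compFamily_succ]
    exact lto_comp (hT 0) (ih _ fun i => hT i.succ)

end Aux

theorem stmt9 {X : Type*} [Fintype X] [Nonempty X] {n : ℕ}
    (T S : Fin n → ((X → ℝ) → (X → ℝ)))
    (hT : ∀ i, IsLowerTransitionOperator (T i))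
    (hS : ∀ i, IsLowerTransitionOperator (S i)) :
    opDist (compFamily T) (compFamily S) ≤ ∑ i, opDist (T i) (S i) := by
  induction n with
  | zero =>
    simp only [Finset.univ_eq_empty, Finset.sum_empty]
    refine ciSup_le fun f => ?_
    simp [compFamily]
  | succ n ih =>
    calc opDist (compFamily T) (compFamily S)
        = opDist (T 0 ∘ compFamily (fun i => T i.succ))
            (S 0 ∘ compFamily (fun i => S i.succ)) := by
          rw [compFamily_succ, compFamily_succ]
      _ ≤ opDist (T 0) (S 0)
            + opDist (compFamily (fun i => T i.succ)) (compFamily (fun i => S i.succ)) :=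
          opDist_comp_le (hT 0) (hS 0)
            (compFamily_lto _ fun i => hT i.succ) (compFamily_lto _ fun i => hS i.succ)
      _ ≤ opDist (T 0) (S 0) + ∑ i : Fin n, opDist (T i.succ) (S i.succ) :=
          add_le_add_right (ih _ _ (fun i => hT i.succ) (fun i => hS i.succ)) _
      _ = ∑ i, opDist (T i) (S i) := by rw [Fin.sum_univ_succ]
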